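/- arXiv:2510.25956 — 2 statements merged into one kernel-verified Lean document; each statement's English description precedes it below -/
import Mathlib

section
/- Let f : ℝᵈ → ℝ be α-strongly convex and β-smooth with minimizer y*. For the rejection sampler with proposal N(y*, (1/α)I) and acceptance probability a(y) = exp(−f(y)+f(y*)+(α/2)‖y−y*‖²), the acceptance probability is at least (α/β)^{d/2}; hence the expected number of trials until acceptance is at most (β/α)^{d/2}. -/
open MeasureTheory Real

noncomputable section

variable {E : Type*} [NormedAddCommGroup E] [InnerProductSpace ℝ E]

/-- strong convexity lower bound at minimizer -/
lemma aux_lb {f : E → ℝ} {al : ℝ} (hconv : StrongConvexOn Set.univ al f)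
    {y0 : E} (hmin : IsMinOn f Set.univ y0) (y : E) :
    f y0 + al / 2 * ‖y - y0‖ ^ 2 ≤ f y := by
  set φ := al / 2 * ‖y - y0‖ ^ 2 with hφ
  have key : ∀ᶠ b in nhdsWithin (1:ℝ) (Set.Iio 1), f y0 + b * φ ≤ f y := by
    filter_upwards [Ioo_mem_nhdsLT_of_mem (Set.mem_Ioc.2 ⟨zero_lt_one, le_refl 1⟩)]
    intro b hb
    have h1 : (0:ℝ) < 1 - b := by linarith [hb.2]
    have h2 := hconv.2 (Set.mem_univ y) (Set.mem_univ y0) h1.le hb.1.le (by ring)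
    have h3 : f y0 ≤ f ((1 - b) • y + b • y0) := hmin (Set.mem_univ _)
    simp only [smul_eq_mul] at h2
    have h4 := h3.trans h2
    have h5 : (1 - b) * (f y0 + b * φ) ≤ (1 - b) * f y := by
      rw [hφ]; ring_nf; ring_nf at h4; linarith
    exact le_of_mul_le_mul_left h5 h1
  have ht : Filter.Tendsto (fun b : ℝ => f y0 + b * φ) (nhdsWithin (1:ℝ) (Set.Iio 1))
      (nhds (f y0 + 1 * φ)) := by
    apply Filter.Tendsto.mono_left _ nhdsWithin_le_nhds
    exact (Continuous.tendsto (by continuity) 1)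
  have := le_of_tendsto ht key
  linarith [this]

/-- descent lemma at a critical point -/
lemma aux_ub [CompleteSpace E] {f : E → ℝ} {be : ℝ} (hbe : 0 ≤ be)
    (hd : Differentiable ℝ f) (hsmooth : LipschitzWith (Real.toNNReal be) (gradient f))
    {y0 : E} (hg0 : gradient f y0 = 0) (y : E) :
    f y ≤ f y0 + be / 2 * ‖y - y0‖ ^ 2 := by
  set v := y - y0 with hv
  have hline : ∀ t : ℝ, HasDerivAt (fun t : ℝ => f (y0 + t • v))
      (inner ℝ (gradient f (y0 + t • v)) v : ℝ) t := by
    intro t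
    have h1 : HasDerivAt (fun t : ℝ => y0 + t • v) v t := by
      simpa using ((hasDerivAt_id t).smul_const v).const_add y0
    have h2 : HasFDerivAt f (InnerProductSpace.toDual ℝ E (gradient f (y0 + t • v))) (y0 + t • v) :=
      (hd (y0 + t • v)).hasGradientAt
    simpa only [Function.comp_def, InnerProductSpace.toDual_apply_apply] using h2.comp_hasDerivAt t h1
  set F : ℝ → ℝ := fun t => f (y0 + t • v) - be / 2 * t ^ 2 * ‖v‖ ^ 2 with hF
  have hF' : ∀ t : ℝ, HasDerivAt F
      ((inner ℝ (gradient f (y0 + t • v)) v : ℝ) - be * t * ‖v‖ ^ 2) t := by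
    intro t
    have h3 : HasDerivAt (fun t : ℝ => be / 2 * t ^ 2 * ‖v‖ ^ 2) (be * t * ‖v‖ ^ 2) t := by
      have := ((hasDerivAt_pow 2 t).const_mul (be / 2)).mul_const (‖v‖ ^ 2)
      refine this.congr_deriv ?_
      ring
    exact (hline t).sub h3
  have hanti : AntitoneOn F (Set.Icc 0 1) := by
    apply antitoneOn_of_deriv_nonpos (convex_Icc 0 1)
    · exact Continuous.continuousOn (by have := hd.continuous; fun_prop)
    · exact fun t _ => (hF' t).differentiableAt.differentiableWithinAt
    · intro t ht
      rw [interior_Icc] at ht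
      rw [(hF' t).deriv]
      have hb1 : (inner ℝ (gradient f (y0 + t • v)) v : ℝ) ≤ be * t * ‖v‖ ^ 2 := by
        calc (inner ℝ (gradient f (y0 + t • v)) v : ℝ)
            = inner ℝ (gradient f (y0 + t • v) - gradient f y0) v := by rw [hg0, sub_zero]
          _ ≤ ‖gradient f (y0 + t • v) - gradient f y0‖ * ‖v‖ := real_inner_le_norm _ _
          _ ≤ (be * ‖(y0 + t • v) - y0‖) * ‖v‖ := by
              gcongr
              have := hsmooth.dist_le_mul (y0 + t • v) y0
              rwa [dist_eq_norm, dist_eq_norm, Real.coe_toNNReal be hbe] at this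
          _ = be * t * ‖v‖ ^ 2 := by
              rw [add_sub_cancel_left, norm_smul, Real.norm_eq_abs, abs_of_pos ht.1]
              ring
      linarith
  have h10 := hanti (Set.left_mem_Icc.2 zero_le_one) (Set.right_mem_Icc.2 zero_le_one) zero_le_one
  simp only [hF, one_smul, zero_smul, add_zero, one_pow] at h10
  have hyv : y0 + v = y := by rw [hv]; abel
  rw [hyv] at h10
  linarith

lemma aux_int [FiniteDimensional ℝ E] [MeasurableSpace E] [BorelSpace E] {b : ℝ} (hb : 0 < b) :
    Integrable (fun v : E => Real.exp (-b * ‖v‖ ^ 2)) := by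
  have h := (GaussianFourier.integrable_cexp_neg_mul_sq_norm_add (V := E) (b := (b : ℂ))
    (by simpa using hb) 0 (0 : E)).re
  refine h.congr (Filter.Eventually.of_forall fun v => ?_)
  simp only [zero_mul, add_zero]
  rw [show (-(b:ℂ) * (‖v‖:ℂ) ^ 2) = ((-b * ‖v‖ ^ 2 : ℝ) : ℂ) by push_cast; ring,
    ← Complex.ofReal_exp]
  exact Complex.ofReal_re _

/-- For the rejection sampler of STATEMENT 16, the overall acceptance
probability `∫ a·p` is at least `(α/β)^{d/2}`; hence the expected number of trials until
acceptance, `(∫ a·p)⁻¹`, is at most `(β/α)^{d/2}`. -/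
theorem stmt17 {d : ℕ} (f : EuclideanSpace ℝ (Fin d) → ℝ) (al be : ℝ)
    (hal : 0 < al) (hab : al ≤ be)
    (hdiff : ContDiff ℝ 2 f)
    (hconv : StrongConvexOn Set.univ al f)
    (hsmooth : LipschitzWith (Real.toNNReal be) (gradient f))
    (ystar : EuclideanSpace ℝ (Fin d)) (hmin : IsMinOn f Set.univ ystar)
    (a p : EuclideanSpace ℝ (Fin d) → ℝ)
    (ha : ∀ y, a y = Real.exp (-f y + f ystar + (al / 2) * ‖y - ystar‖ ^ 2))
    (hp : ∀ y, p y = (al / (2 * Real.pi)) ^ ((d : ℝ) / 2) *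
        Real.exp (-(al / 2) * ‖y - ystar‖ ^ 2)) :
    (al / be) ^ ((d : ℝ) / 2) ≤ (∫ y, a y * p y) ∧
    (∫ y, a y * p y)⁻¹ ≤ (be / al) ^ ((d : ℝ) / 2) := by
  have hbe : 0 < be := lt_of_lt_of_le hal hab
  have hd2 : Differentiable ℝ f := hdiff.differentiable (by norm_num)
  have hg0 : gradient f ystar = 0 := by
    have h1 : fderiv ℝ f ystar = 0 := (hmin.isLocalMin Filter.univ_mem).fderiv_eq_zero
    simp [gradient, h1]
  have hub : ∀ y, f y ≤ f ystar + be / 2 * ‖y - ystar‖ ^ 2 :=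
    aux_ub hbe.le hd2 hsmooth hg0
  have hlb : ∀ y, f ystar + al / 2 * ‖y - ystar‖ ^ 2 ≤ f y :=
    aux_lb hconv hmin
  set C : ℝ := (al / (2 * π)) ^ ((d : ℝ) / 2) with hC
  have hCpos : 0 < C := Real.rpow_pos_of_pos (by positivity) _
  have hap : ∀ y, a y * p y = C * Real.exp (f ystar - f y) := by
    intro y
    rw [ha y, hp y, mul_comm (Real.exp _), mul_assoc, ← Real.exp_add]
    congr 1; ring
  have hlow : ∀ y, C * Real.exp (-(be / 2) * ‖y - ystar‖ ^ 2) ≤ a y * p y := by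
    intro y; rw [hap y]
    exact mul_le_mul_of_nonneg_left (Real.exp_le_exp.2 (by linarith [hub y])) hCpos.le
  have hupp : ∀ y, a y * p y ≤ C * Real.exp (-(al / 2) * ‖y - ystar‖ ^ 2) := by
    intro y; rw [hap y]
    exact mul_le_mul_of_nonneg_left (Real.exp_le_exp.2 (by linarith [hlb y])) hCpos.le
  have hpos : ∀ y, 0 ≤ a y * p y := fun y => by rw [hap y]; positivity
  have hint_al : Integrable (fun y : EuclideanSpace ℝ (Fin d) =>
      C * Real.exp (-(al / 2) * ‖y - ystar‖ ^ 2)) :=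
    ((aux_int (half_pos hal)).const_mul C).comp_sub_right ystar
  have hint_be : Integrable (fun y : EuclideanSpace ℝ (Fin d) =>
      C * Real.exp (-(be / 2) * ‖y - ystar‖ ^ 2)) :=
    ((aux_int (half_pos hbe)).const_mul C).comp_sub_right ystar
  have hint_ap : Integrable (fun y => a y * p y) := by
    apply hint_al.mono'
    · have hc : Continuous fun y => a y * p y := by
        have heq : (fun y => a y * p y) = fun y => C * Real.exp (f ystar - f y) := funext hap
        rw [heq]
        exact continuous_const.mul (Real.continuous_exp.comp (continuous_const.sub hdiff.continuous))
      exact hc.aestronglyMeasurable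
    · filter_upwards with y
      rw [Real.norm_eq_abs, abs_of_nonneg (hpos y)]
      exact hupp y
  have hrankd : (Module.finrank ℝ (EuclideanSpace ℝ (Fin d)) : ℝ) = (d : ℝ) := by
    rw [finrank_euclideanSpace_fin]
  have hI_be : ∫ y : EuclideanSpace ℝ (Fin d), C * Real.exp (-(be / 2) * ‖y - ystar‖ ^ 2)
      = (al / be) ^ ((d : ℝ) / 2) := by
    rw [integral_const_mul]
    rw [integral_sub_right_eq_self
      (fun v : EuclideanSpace ℝ (Fin d) => Real.exp (-(be / 2) * ‖v‖ ^ 2)) ystar]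
    rw [GaussianFourier.integral_rexp_neg_mul_sq_norm (half_pos hbe), hrankd, hC,
      ← Real.mul_rpow (by positivity) (by positivity)]
    congr 1
    field_simp
  have h1 : (al / be) ^ ((d : ℝ) / 2) ≤ ∫ y, a y * p y := by
    rw [← hI_be]
    exact integral_mono hint_be hint_ap hlow
  refine ⟨h1, ?_⟩
  have hrpos : (0 : ℝ) < (al / be) ^ ((d : ℝ) / 2) :=
    Real.rpow_pos_of_pos (div_pos hal hbe) _
  have h2 : (∫ y, a y * p y)⁻¹ ≤ ((al / be) ^ ((d : ℝ) / 2))⁻¹ :=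
    inv_anti₀ hrpos h1
  refine h2.trans_eq ?_
  rw [← Real.inv_rpow (by positivity), inv_div]
end
end

section
/- (Laplace/Gibbs limit) Let V : ℝᵈ → ℝ be continuous with unique global minimizer x*, growing at infinity so that ∫ e^{−V/ε} dy < ∞ for all small ε > 0. Then the Gibbs measures π_ε ∝ e^{−V/ε} converge weakly to the Dirac mass δ_{x*} as ε → 0⁺. -/
open MeasureTheory Real Filter

noncomputable section

set_option maxHeartbeats 1000000

/-- Laplace/Gibbs limit: if `V` is continuous, coercive, with unique
global minimizer `x*`, and `∫ e^{−V/ε}` is finite for all small `ε > 0`, then the Gibbs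
measures `π_ε ∝ e^{−V/ε}` converge weakly to `δ_{x*}` as `ε → 0⁺`: for every bounded
continuous `f`, `∫ f dπ_ε → f(x*)`. -/
theorem stmt19 {d : ℕ} (V : EuclideanSpace ℝ (Fin d) → ℝ) (hVcont : Continuous V)
    (hVcoer : Tendsto V (cocompact (EuclideanSpace ℝ (Fin d))) atTop)
    (xstar : EuclideanSpace ℝ (Fin d))
    (hmin : ∀ y, y ≠ xstar → V xstar < V y)
    (ε₀ : ℝ) (hε₀ : 0 < ε₀)
    (hint : ∀ ε : ℝ, 0 < ε → ε < ε₀ → Integrable (fun y => Real.exp (-V y / ε))) :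
    ∀ f : EuclideanSpace ℝ (Fin d) → ℝ, Continuous f → (∃ M, ∀ y, |f y| ≤ M) →
      Tendsto (fun ε : ℝ =>
          (∫ y, f y * Real.exp (-V y / ε)) / ∫ y, Real.exp (-V y / ε))
        (nhdsWithin 0 (Set.Ioi 0)) (nhds (f xstar)) := by
  rintro f hf ⟨M, hM⟩
  have hM0 : 0 ≤ M := le_trans (abs_nonneg _) (hM xstar)
  set ε₁ : ℝ := ε₀ / 2 with hε₁def
  have hε₁pos : 0 < ε₁ := by positivity
  have hε₁lt : ε₁ < ε₀ := by rw [hε₁def]; linarith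
  have hC : Integrable (fun y => Real.exp (-V y / ε₁)) := hint ε₁ hε₁pos hε₁lt
  set C : ℝ := ∫ y, Real.exp (-V y / ε₁) with hCdef
  have hC0 : 0 ≤ C := integral_nonneg fun y => (exp_nonneg _)
  rw [Metric.tendsto_nhds]
  intro η hη
  -- radius of continuity of f at xstar
  obtain ⟨r, hr, hfr⟩ := Metric.continuousAt_iff.1 hf.continuousAt (η / 4) (by positivity)
  -- gap m outside the ball of radius r
  obtain ⟨m, hm, hVm⟩ : ∃ m, 0 < m ∧
      ∀ y, y ∉ Metric.ball xstar r → V xstar + m ≤ V y := by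
    have hcoK : ∀ᶠ y in cocompact (EuclideanSpace ℝ (Fin d)), V xstar + 1 ≤ V y :=
      hVcoer.eventually (eventually_ge_atTop _)
    obtain ⟨K, hKc, hKs⟩ := mem_cocompact.1 hcoK
    have hScomp : IsCompact (K ∩ (Metric.ball xstar r)ᶜ) :=
      hKc.inter_right Metric.isOpen_ball.isClosed_compl
    by_cases hS : (K ∩ (Metric.ball xstar r)ᶜ).Nonempty
    · obtain ⟨y₀, hy₀S, hy₀min⟩ := hScomp.exists_isMinOn hS hVcont.continuousOn
      have hy₀ne : y₀ ≠ xstar := by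
        intro h
        exact hy₀S.2 (by rw [h]; exact Metric.mem_ball_self hr)
      refine ⟨min 1 (V y₀ - V xstar),
        lt_min one_pos (sub_pos.2 (hmin y₀ hy₀ne)), fun y hy => ?_⟩
      by_cases hyK : y ∈ K
      · have h1 : V y₀ ≤ V y := isMinOn_iff.1 hy₀min y ⟨hyK, hy⟩
        have := min_le_right 1 (V y₀ - V xstar)
        linarith
      · have h1 : V xstar + 1 ≤ V y := hKs hyK
        have := min_le_left 1 (V y₀ - V xstar)
        linarith
    · exact ⟨1, one_pos, fun y hy => hKs fun hyK => hS ⟨y, hyK, hy⟩⟩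
  -- small ball where V ≤ V xstar + m/2
  obtain ⟨r', hr'pos, hVr'⟩ : ∃ r', 0 < r' ∧
      ∀ y ∈ Metric.ball xstar r', V y ≤ V xstar + m / 2 := by
    obtain ⟨δ, hδ, hδV⟩ := Metric.continuousAt_iff.1 hVcont.continuousAt (m / 2)
      (by positivity)
    refine ⟨δ, hδ, fun y hy => ?_⟩
    have h1 := hδV (Metric.mem_ball.1 hy)
    rw [Real.dist_eq] at h1
    have h2 := (abs_le.1 h1.le).2
    linarith
  set vol : ℝ := (volume (Metric.ball xstar r')).toReal with hvoldef
  have hvolpos : 0 < vol :=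
    ENNReal.toReal_pos (Metric.measure_ball_pos volume xstar hr'pos).ne'
      measure_ball_lt_top.ne
  set c : ℝ := V xstar + m with hcdef
  set Kc : ℝ := 2 * M * C * Real.exp (c / ε₁) / vol with hKcdef
  have hKc0 : 0 ≤ Kc := by positivity
  -- the exponential bound tends to 0
  have hexp : Tendsto (fun ε : ℝ => Kc * Real.exp (-(m / 2) / ε))
      (nhdsWithin 0 (Set.Ioi 0)) (nhds 0) := by
    have h1 : Tendsto (fun ε : ℝ => (m / 2) * ε⁻¹) (nhdsWithin 0 (Set.Ioi 0)) atTop :=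
      Tendsto.const_mul_atTop (by positivity) tendsto_inv_nhdsGT_zero
    have h2 : Tendsto (fun ε : ℝ => -(m / 2) / ε) (nhdsWithin 0 (Set.Ioi 0)) atBot := by
      have h3 := tendsto_neg_atTop_atBot.comp h1
      refine h3.congr fun ε => ?_
      simp [neg_div, div_eq_mul_inv]
    have h3 := Real.tendsto_exp_atBot.comp h2
    have h4 := h3.const_mul Kc
    simpa using h4
  have hIoo : ∀ᶠ ε in nhdsWithin (0:ℝ) (Set.Ioi 0), ε ∈ Set.Ioo (0:ℝ) ε₁ :=
    Ioo_mem_nhdsGT_of_mem ⟨le_refl 0, hε₁pos⟩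
  filter_upwards [hIoo, hexp.eventually (gt_mem_nhds (show (0:ℝ) < η / 2 by positivity))]
    with ε hε hKe
  obtain ⟨hεpos, hεlt⟩ := hε
  have hεne : ε ≠ 0 := hεpos.ne'
  have hInt : Integrable (fun y => Real.exp (-V y / ε)) := hint ε hεpos (hεlt.trans hε₁lt)
  set Z : ℝ := ∫ y, Real.exp (-V y / ε) with hZdef
  set N : ℝ := ∫ y, f y * Real.exp (-V y / ε) with hNdef
  -- lower bound for Z
  have hZlow : vol * Real.exp (-(V xstar + m / 2) / ε) ≤ Z := by
    have h1 : Real.exp (-(V xstar + m / 2) / ε) * vol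
        ≤ ∫ y in Metric.ball xstar r', Real.exp (-V y / ε) := by
      apply setIntegral_ge_of_const_le_real measurableSet_ball measure_ball_lt_top.ne
      · intro y hy
        apply Real.exp_le_exp.2
        apply (div_le_div_iff_of_pos_right hεpos).2
        have := hVr' y hy
        linarith
      · exact hInt.integrableOn
    have h2 : (∫ y in Metric.ball xstar r', Real.exp (-V y / ε)) ≤ Z :=
      setIntegral_le_integral hInt (Eventually.of_forall fun y => exp_nonneg _)
    linarith [h1, h2]
  have hZpos : 0 < Z := lt_of_lt_of_le (by positivity) hZlow
  -- integrabilities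
  have hfg : Integrable (fun y => f y * Real.exp (-V y / ε)) :=
    hInt.bdd_mul hf.aestronglyMeasurable
      (Eventually.of_forall fun y => by simpa [Real.norm_eq_abs] using hM y)
  have h2Mbd : ∀ y, |f y - f xstar| ≤ 2 * M := by
    intro y
    calc |f y - f xstar| ≤ |f y| + |f xstar| := abs_sub _ _
      _ ≤ 2 * M := by linarith [hM y, hM xstar]
  have habs : Integrable (fun y => |f y - f xstar| * Real.exp (-V y / ε)) :=
    hInt.bdd_mul ((hf.sub continuous_const).abs).aestronglyMeasurable
      (c := 2 * M) (Eventually.of_forall fun y => by rw [Real.norm_eq_abs, abs_abs]; exact h2Mbd y)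
  -- identity for the numerator
  have hNid : N - f xstar * Z = ∫ y, (f y - f xstar) * Real.exp (-V y / ε) := by
    have : (fun y => (f y - f xstar) * Real.exp (-V y / ε))
        = fun y => f y * Real.exp (-V y / ε) - f xstar * Real.exp (-V y / ε) := by
      funext y; ring
    rw [this, integral_sub hfg (hInt.const_mul _), integral_const_mul]
  -- splitting
  have hsplit : (∫ y, |f y - f xstar| * Real.exp (-V y / ε))
      = (∫ y in Metric.ball xstar r, |f y - f xstar| * Real.exp (-V y / ε))
        + ∫ y in (Metric.ball xstar r)ᶜ, |f y - f xstar| * Real.exp (-V y / ε) :=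
    (integral_add_compl measurableSet_ball habs).symm
  -- inner bound
  have hball : (∫ y in Metric.ball xstar r, |f y - f xstar| * Real.exp (-V y / ε))
      ≤ (η / 4) * Z := by
    calc (∫ y in Metric.ball xstar r, |f y - f xstar| * Real.exp (-V y / ε))
        ≤ ∫ y in Metric.ball xstar r, (η / 4) * Real.exp (-V y / ε) := by
          apply setIntegral_mono_on habs.integrableOn (hInt.const_mul _).integrableOn
            measurableSet_ball
          intro y hy
          have h1 := hfr (Metric.mem_ball.1 hy)
          rw [Real.dist_eq] at h1
          exact mul_le_mul_of_nonneg_right h1.le (exp_nonneg _)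
      _ = (η / 4) * ∫ y in Metric.ball xstar r, Real.exp (-V y / ε) :=
          integral_const_mul _ _
      _ ≤ (η / 4) * Z := by
          apply mul_le_mul_of_nonneg_left _ (by positivity)
          exact setIntegral_le_integral hInt (Eventually.of_forall fun y => exp_nonneg _)
  -- outer bound
  have hεinv : 1 / ε₁ - 1 / ε ≤ 0 := by
    have := one_div_le_one_div_of_le hεpos hεlt.le
    linarith
  have hout : (∫ y in (Metric.ball xstar r)ᶜ, |f y - f xstar| * Real.exp (-V y / ε))
      ≤ 2 * M * C * Real.exp (c * (1 / ε₁ - 1 / ε)) := by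
    have hpt : ∀ y ∈ (Metric.ball xstar r)ᶜ,
        |f y - f xstar| * Real.exp (-V y / ε)
          ≤ (2 * M * Real.exp (c * (1 / ε₁ - 1 / ε))) * Real.exp (-V y / ε₁) := by
      intro y hy
      have hVy : c ≤ V y := hVm y hy
      have hexpeq : Real.exp (-V y / ε)
          = Real.exp (V y * (1 / ε₁ - 1 / ε)) * Real.exp (-V y / ε₁) := by
        rw [← Real.exp_add]
        congr 1
        field_simp
        ring
      have h1 : Real.exp (V y * (1 / ε₁ - 1 / ε)) ≤ Real.exp (c * (1 / ε₁ - 1 / ε)) :=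
        Real.exp_le_exp.2 (mul_le_mul_of_nonpos_right hVy hεinv)
      calc |f y - f xstar| * Real.exp (-V y / ε)
          ≤ (2 * M) * Real.exp (-V y / ε) :=
            mul_le_mul_of_nonneg_right (h2Mbd y) (exp_nonneg _)
        _ = (2 * M) * (Real.exp (V y * (1 / ε₁ - 1 / ε)) * Real.exp (-V y / ε₁)) := by
            rw [hexpeq]
        _ ≤ (2 * M) * (Real.exp (c * (1 / ε₁ - 1 / ε)) * Real.exp (-V y / ε₁)) := by
            apply mul_le_mul_of_nonneg_left _ (by positivity)
            exact mul_le_mul_of_nonneg_right h1 (exp_nonneg _)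
        _ = (2 * M * Real.exp (c * (1 / ε₁ - 1 / ε))) * Real.exp (-V y / ε₁) := by ring
    calc (∫ y in (Metric.ball xstar r)ᶜ, |f y - f xstar| * Real.exp (-V y / ε))
        ≤ ∫ y in (Metric.ball xstar r)ᶜ,
            (2 * M * Real.exp (c * (1 / ε₁ - 1 / ε))) * Real.exp (-V y / ε₁) :=
          setIntegral_mono_on habs.integrableOn (hC.const_mul _).integrableOn
            measurableSet_ball.compl hpt
      _ = (2 * M * Real.exp (c * (1 / ε₁ - 1 / ε)))
            * ∫ y in (Metric.ball xstar r)ᶜ, Real.exp (-V y / ε₁) :=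
          integral_const_mul _ _
      _ ≤ (2 * M * Real.exp (c * (1 / ε₁ - 1 / ε))) * C := by
          apply mul_le_mul_of_nonneg_left _ (by positivity)
          exact setIntegral_le_integral hC (Eventually.of_forall fun y => exp_nonneg _)
      _ = 2 * M * C * Real.exp (c * (1 / ε₁ - 1 / ε)) := by ring
  -- key comparison with the exponential bound times Z
  have hKey : 2 * M * C * Real.exp (c * (1 / ε₁ - 1 / ε))
      ≤ (Kc * Real.exp (-(m / 2) / ε)) * Z := by
    have heq : 2 * M * C * Real.exp (c * (1 / ε₁ - 1 / ε))
        = (Kc * Real.exp (-(m / 2) / ε)) * (vol * Real.exp (-(V xstar + m / 2) / ε)) := by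
      have hexpeq : Real.exp (c * (1 / ε₁ - 1 / ε))
          = Real.exp (c / ε₁)
            * (Real.exp (-(m / 2) / ε) * Real.exp (-(V xstar + m / 2) / ε)) := by
        rw [← Real.exp_add, ← Real.exp_add]
        congr 1
        rw [hcdef]
        field_simp
        ring
      rw [hexpeq, hKcdef]
      field_simp
    rw [heq]
    exact mul_le_mul_of_nonneg_left hZlow (by positivity)
  -- assembling
  have habs_le : |N - f xstar * Z| ≤ (η / 4) * Z + (Kc * Real.exp (-(m / 2) / ε)) * Z := by
    rw [hNid]
    calc |∫ y, (f y - f xstar) * Real.exp (-V y / ε)|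
        ≤ ∫ y, |f y - f xstar| * Real.exp (-V y / ε) := by
          simpa [Real.norm_eq_abs] using
            norm_integral_le_integral_norm (μ := volume)
              (fun y => (f y - f xstar) * Real.exp (-V y / ε))
      _ = _ := hsplit
      _ ≤ (η / 4) * Z + (Kc * Real.exp (-(m / 2) / ε)) * Z :=
          add_le_add hball (hout.trans hKey)
  rw [Real.dist_eq]
  have hdiff : N / Z - f xstar = (N - f xstar * Z) / Z := by
    field_simp
  rw [hdiff, abs_div, abs_of_pos hZpos, div_lt_iff₀ hZpos]
  calc |N - f xstar * Z| ≤ (η / 4) * Z + (Kc * Real.exp (-(m / 2) / ε)) * Z := habs_le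
    _ < (η / 4) * Z + (η / 2) * Z :=
        add_lt_add_right (mul_lt_mul_of_pos_right hKe hZpos) _
    _ ≤ η * Z := by nlinarith [hZpos.le]
end
end
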